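/- Let n ≥ 3 and let φ be a CNF formula over Boolean variables indexed by Fin n consisting of m ≥ 1 clauses, where clause i is given by an injection c_i : Fin 3 → Fin n and signs σ_i : Fin 3 → Bool, and x : Fin n → Bool satisfies clause i iff there exists k with x(c_i k) = σ_i k. For clause i and a partial assignment a : Fin 3 → Bool satisfying clause i (i.e., ∃ k, a k = σ_i k), define for j ∈ Fin n and b ∈ Bool: w_{i,a}(j,b) = (if b = a k then 1 else 0) when j = c_i k for some k, and w_{i,a}(j,b) = 1/2 otherwise. Define S(x) = (1/(7m)) · Σ_{i} Σ_{a : Fin 3 → Bool, a satisfies clause i} Π_{j ∈ Fin n} w_{i,a}(j, x j). Then for every x : Fin n → Bool, S(x) = (number of clauses of φ satisfied by x) · 2^{3−n} / (7m). -/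
import Mathlib


/-- The leaf weight `w_{i,a}(j,b)` for a clause with variables `c : Fin 3 → Fin n` and a
partial assignment `a : Fin 3 → Bool`: it equals `if b = a k then 1 else 0` when `j = c k`
for some `k`, and `1/2` otherwise. -/
noncomputable def wfun {n : ℕ} (c : Fin 3 → Fin n) (a : Fin 3 → Bool)
    (j : Fin n) (b : Bool) : ℝ :=
  if h : ∃ k, c k = j then (if b = a h.choose then 1 else 0) else 1 / 2

/-- The SPN value `S(x) = (1/(7m)) · Σ_i Σ_{a satisfying clause i} Π_j w_{i,a}(j, x j)`. -/
noncomputable def SCnf (n m : ℕ) (c : Fin m → Fin 3 → Fin n) (σ : Fin m → Fin 3 → Bool)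
    (x : Fin n → Bool) : ℝ :=
  (1 / (7 * m)) * ∑ i, ∑ a ∈ Finset.univ.filter (fun a : Fin 3 → Bool => ∃ k, a k = σ i k),
    ∏ j, wfun (c i) a j (x j)


lemma wfun_apply {n : ℕ} {c : Fin 3 → Fin n} (hc : Function.Injective c)
    (a : Fin 3 → Bool) (k : Fin 3) (b : Bool) :
    wfun c a (c k) b = if b = a k then 1 else 0 := by
  unfold wfun
  have h : ∃ k', c k' = c k := ⟨k, rfl⟩
  rw [dif_pos h, hc h.choose_spec]

lemma wfun_not {n : ℕ} {c : Fin 3 → Fin n} {j : Fin n} (hj : ∀ k, c k ≠ j)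
    (a : Fin 3 → Bool) (b : Bool) : wfun c a j b = 1 / 2 := by
  unfold wfun
  rw [dif_neg (by push_neg; exact hj)]

lemma prod_wfun {n : ℕ} (hn : 3 ≤ n) {c : Fin 3 → Fin n} (hc : Function.Injective c)
    (a : Fin 3 → Bool) (x : Fin n → Bool) :
    ∏ j, wfun c a j (x j)
      = if (∀ k, x (c k) = a k) then (2 : ℝ) ^ ((3 : ℤ) - n) else 0 := by
  classical
  set s := Finset.image c Finset.univ with hs
  rw [← Finset.prod_sdiff (Finset.subset_univ s)]
  have h1 : ∏ j ∈ Finset.univ \ s, wfun c a j (x j)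
      = (1 / 2 : ℝ) ^ (n - 3) := by
    rw [Finset.prod_congr rfl (fun j hj => ?_), Finset.prod_const]
    · congr 1
      rw [Finset.card_sdiff_of_subset (Finset.subset_univ s)]
      simp [hs, Finset.card_image_of_injective _ hc]
    · apply wfun_not _ a
      intro k hk
      simp only [Finset.mem_sdiff, Finset.mem_univ, true_and, hs] at hj
      exact hj (Finset.mem_image.2 ⟨k, Finset.mem_univ k, hk⟩)
  have h2 : ∏ j ∈ s, wfun c a j (x j)
      = if (∀ k, x (c k) = a k) then (1 : ℝ) else 0 := by
    rw [hs, Finset.prod_image (fun k _ k' _ h => hc h)]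
    by_cases h : ∀ k, x (c k) = a k
    · rw [if_pos h]
      exact Finset.prod_eq_one (fun k _ => by rw [wfun_apply hc, if_pos (h k)])
    · rw [if_neg h]
      push_neg at h
      obtain ⟨k, hk⟩ := h
      exact Finset.prod_eq_zero (Finset.mem_univ k) (by rw [wfun_apply hc, if_neg hk])
  rw [h1, h2]
  by_cases h : ∀ k, x (c k) = a k
  · rw [if_pos h, if_pos h, mul_one]
    rw [show (3 : ℤ) - n = -((n - 3 : ℕ) : ℤ) by omega, zpow_neg, zpow_natCast]
    rw [one_div, inv_pow]
  · rw [if_neg h, if_neg h, mul_zero]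

/-- For every `x : Fin n → Bool`,
`S(x) = (number of clauses satisfied by x) · 2^(3−n) / (7m)`. -/
theorem stmt6 (n m : ℕ) (hn : 3 ≤ n) (hm : 1 ≤ m)
    (c : Fin m → Fin 3 → Fin n) (hc : ∀ i, Function.Injective (c i))
    (σ : Fin m → Fin 3 → Bool) (x : Fin n → Bool) :
    SCnf n m c σ x =
      ((Finset.univ.filter (fun i : Fin m => ∃ k, x (c i k) = σ i k)).card : ℝ)
        * (2 : ℝ) ^ ((3 : ℤ) - n) / (7 * m) := by
  classical
  unfold SCnf
  have key : ∀ i : Fin m,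
      (∑ a ∈ Finset.univ.filter (fun a : Fin 3 → Bool => ∃ k, a k = σ i k),
        ∏ j, wfun (c i) a j (x j))
      = if (∃ k, x (c i k) = σ i k) then (2 : ℝ) ^ ((3 : ℤ) - n) else 0 := by
    intro i
    have : ∀ a : Fin 3 → Bool, (∏ j, wfun (c i) a j (x j))
        = if a = (fun k => x (c i k)) then (2 : ℝ) ^ ((3 : ℤ) - n) else 0 := by
      intro a
      rw [prod_wfun hn (hc i)]
      congr 1
      simp only [eq_iff_iff]
      constructor
      · intro h; funext k; exact (h k).symm
      · intro h k; rw [h]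
    rw [Finset.sum_congr rfl (fun a _ => this a), Finset.sum_ite_eq']
    simp
  rw [Finset.sum_congr rfl (fun i _ => key i), ← Finset.sum_filter, Finset.sum_const,
    nsmul_eq_mul]
  ring
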